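/- L^p-integrability of the symbol h_α: let α > 0 and 1 ≤ p < ∞. Then ∫_{ℝ²} |h_α(ξ₁,ξ₂)|^p d(ξ₁,ξ₂) < ∞ if and only if 1/2 + 3/(2(1+α)) < p < 2. -/

import Mathlib

open MeasureTheory Set

noncomputable section

/-- The symbol `h_α(ξ) = ξ₁ / (ξ₁² + ξ₂² + |ξ₁|^{α+2})` (with value `0` at the origin,
which is the value Lean's division by zero gives). -/
def hSymb (α : ℝ) (ξ : ℝ × ℝ) : ℝ :=
  ξ.1 / (ξ.1 ^ 2 + ξ.2 ^ 2 + |ξ.1| ^ (α + 2))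

namespace HSymbAux

/-- The constant `C_p = ∫ (1+t²)^{-p} dt`. -/
def Cp (p : ℝ) : ℝ := ∫ t : ℝ, (1 + t ^ 2) ^ (-p)

lemma cont_base (p : ℝ) : Continuous fun t : ℝ => (1 + t ^ 2) ^ (-p) := by
  refine Continuous.rpow_const (by continuity) fun t => Or.inl ?_
  positivity

lemma Cp_integrable {p : ℝ} (hp : 1 ≤ p) :
    Integrable (fun t : ℝ => (1 + t ^ 2) ^ (-p)) := by
  refine integrable_inv_one_add_sq.mono' (cont_base p).aestronglyMeasurable
    (Filter.Eventually.of_forall fun t => ?_)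
  have h1 : (1 : ℝ) ≤ 1 + t ^ 2 := by nlinarith [sq_nonneg t]
  have h0 : (0 : ℝ) < 1 + t ^ 2 := by positivity
  rw [Real.norm_eq_abs, abs_of_nonneg (Real.rpow_nonneg h0.le _)]
  calc (1 + t ^ 2) ^ (-p) ≤ (1 + t ^ 2) ^ (-1 : ℝ) :=
        Real.rpow_le_rpow_of_exponent_le h1 (by linarith)
    _ = (1 + t ^ 2)⁻¹ := by rw [Real.rpow_neg_one]

lemma Cp_pos {p : ℝ} (hp : 1 ≤ p) : 0 < Cp p := by
  rw [Cp, integral_pos_iff_support_of_nonneg]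
  · have : Function.support (fun t : ℝ => (1 + t ^ 2) ^ (-p)) = univ := by
      ext t
      have h0 : (0 : ℝ) < 1 + t ^ 2 := by positivity
      simp [Function.mem_support, (Real.rpow_pos_of_pos h0 (-p)).ne']
    rw [this]
    simp
  · intro t
    have h0 : (0 : ℝ) < 1 + t ^ 2 := by positivity
    exact Real.rpow_nonneg h0.le _
  · exact Cp_integrable hp

lemma addsq_eq {p A : ℝ} (hA : 0 < A) (y : ℝ) :
    (A + y ^ 2) ^ (-p) = A ^ (-p) * (1 + (y / Real.sqrt A) ^ 2) ^ (-p) := by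
  have hs : (0 : ℝ) < Real.sqrt A := Real.sqrt_pos.2 hA
  have h1 : A + y ^ 2 = A * (1 + (y / Real.sqrt A) ^ 2) := by
    rw [div_pow, Real.sq_sqrt hA.le]
    field_simp
  rw [h1, Real.mul_rpow hA.le (by positivity)]

lemma integrable_addsq {p : ℝ} (hp : 1 ≤ p) {A : ℝ} (hA : 0 < A) :
    Integrable fun y : ℝ => (A + y ^ 2) ^ (-p) := by
  have hs : (0 : ℝ) < Real.sqrt A := Real.sqrt_pos.2 hA
  have : (fun y : ℝ => (A + y ^ 2) ^ (-p)) =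
      fun y : ℝ => A ^ (-p) * (1 + (y / Real.sqrt A) ^ 2) ^ (-p) := by
    ext y; exact addsq_eq hA y
  rw [this]
  exact ((integrable_comp_div_iff (fun t : ℝ => (1 + t ^ 2) ^ (-p)) hs.ne').2
    (Cp_integrable hp)).const_mul _

lemma integral_addsq {p : ℝ} {A : ℝ} (hA : 0 < A) :
    ∫ y : ℝ, (A + y ^ 2) ^ (-p) = A ^ (1 / 2 - p) * Cp p := by
  have hs : (0 : ℝ) < Real.sqrt A := Real.sqrt_pos.2 hA
  simp_rw [addsq_eq hA]
  rw [integral_const_mul, Measure.integral_comp_div (fun t : ℝ => (1 + t ^ 2) ^ (-p)) (Real.sqrt A),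
    abs_of_pos hs, smul_eq_mul, ← mul_assoc]
  congr 1
  rw [Real.sqrt_eq_rpow, ← Real.rpow_add hA]
  congr 1
  ring

/-- The 1D profile function. -/
def g (α p : ℝ) (x : ℝ) : ℝ := x ^ (1 - p) * (1 + x ^ α) ^ (1 / 2 - p)

lemma g_meas (α p : ℝ) : Measurable (g α p) := by
  apply Measurable.mul
  · exact measurable_id.pow_const _
  · exact (measurable_const.add (measurable_id.pow_const _)).pow_const _

lemma g_nonneg {α p : ℝ} {x : ℝ} (hx : 0 ≤ x) : 0 ≤ g α p x := by
  have h1 : (0 : ℝ) ≤ 1 + x ^ α := by positivity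
  exact mul_nonneg (Real.rpow_nonneg hx _) (Real.rpow_nonneg h1 _)

/-- Pointwise formula for sections with `x ≠ 0`. -/
lemma section_eq {α p : ℝ} {x : ℝ} (hx : x ≠ 0) (y : ℝ) :
    |hSymb α (x, y)| ^ p = |x| ^ p * ((x ^ 2 + |x| ^ (α + 2)) + y ^ 2) ^ (-p) := by
  have hx2 : (0 : ℝ) < x ^ 2 := by positivity
  have hD : (0 : ℝ) < x ^ 2 + y ^ 2 + |x| ^ (α + 2) := by positivity
  have hD' : (0 : ℝ) < (x ^ 2 + |x| ^ (α + 2)) + y ^ 2 := by positivity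
  have hre : x ^ 2 + y ^ 2 + |x| ^ (α + 2) = (x ^ 2 + |x| ^ (α + 2)) + y ^ 2 := by ring
  rw [hSymb]
  simp only
  rw [abs_div, abs_of_pos hD, Real.div_rpow (abs_nonneg x) hD.le, hre,
    Real.rpow_neg hD'.le, div_eq_mul_inv]

/-- Factorization of the inner-integral result. -/
lemma inner_factor {α p : ℝ} {x : ℝ} (hx : x ≠ 0) :
    |x| ^ p * (x ^ 2 + |x| ^ (α + 2)) ^ (1 / 2 - p) = g α p |x| := by
  have hxa : (0 : ℝ) < |x| := abs_pos.2 hx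
  have hab : |x| ^ (2 : ℝ) = x ^ 2 := by
    rw [show (2 : ℝ) = ((2 : ℕ) : ℝ) by norm_num, Real.rpow_natCast, sq_abs]
  have e1 : |x| ^ (α + 2) = |x| ^ α * x ^ 2 := by
    rw [Real.rpow_add hxa, hab]
  have h1 : x ^ 2 + |x| ^ (α + 2) = x ^ 2 * (1 + |x| ^ α) := by
    rw [e1]; ring
  have h2 : (0 : ℝ) < 1 + |x| ^ α := by positivity
  rw [h1, Real.mul_rpow (sq_nonneg x) h2.le, ← hab, ← Real.rpow_mul hxa.le,
    ← mul_assoc, ← Real.rpow_add hxa, g,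
    show p + 2 * (1 / 2 - p) = 1 - p by ring]

lemma section_integrable {α p : ℝ} (hp : 1 ≤ p) {x : ℝ} (hx : x ≠ 0) :
    Integrable fun y : ℝ => |hSymb α (x, y)| ^ p := by
  have hA : (0 : ℝ) < x ^ 2 + |x| ^ (α + 2) := by positivity
  have : (fun y : ℝ => |hSymb α (x, y)| ^ p) =
      fun y => |x| ^ p * ((x ^ 2 + |x| ^ (α + 2)) + y ^ 2) ^ (-p) := by
    ext y; exact section_eq hx y
  rw [this]
  exact (integrable_addsq hp hA).const_mul _

lemma section_integral {α p : ℝ} {x : ℝ} (hx : x ≠ 0) :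
    ∫ y : ℝ, |hSymb α (x, y)| ^ p = Cp p * g α p |x| := by
  have hA : (0 : ℝ) < x ^ 2 + |x| ^ (α + 2) := by positivity
  simp_rw [section_eq hx]
  rw [integral_const_mul, integral_addsq hA,
    show |x| ^ p * ((x ^ 2 + |x| ^ (α + 2)) ^ (1 / 2 - p) * Cp p)
      = (|x| ^ p * (x ^ 2 + |x| ^ (α + 2)) ^ (1 / 2 - p)) * Cp p by ring,
    inner_factor hx, mul_comm]

lemma hSymb_meas (α p : ℝ) :
    Measurable fun ξ : ℝ × ℝ => |hSymb α ξ| ^ p := by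
  apply Measurable.pow_const
  apply Measurable.abs
  unfold hSymb
  exact measurable_fst.div
    (((measurable_fst.pow_const 2).add (measurable_snd.pow_const 2)).add
      (measurable_fst.abs.pow_const _))

/-- Evenness reduction. -/
lemma integrable_comp_abs_iff (f : ℝ → ℝ) :
    Integrable (fun x : ℝ => f |x|) ↔ IntegrableOn f (Ioi (0 : ℝ)) := by
  constructor
  · intro h
    exact h.integrableOn.congr_fun (fun x hx => by show f |x| = f x; rw [abs_of_pos hx]) measurableSet_Ioi
  · intro h
    have hIoi : IntegrableOn (fun x : ℝ => f |x|) (Ioi 0) :=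
      h.congr_fun (fun x hx => by rw [abs_of_pos hx]) measurableSet_Ioi
    have hIic : IntegrableOn (fun x : ℝ => f |x|) (Iic 0) := by
      rw [← Measure.map_neg_eq_self (volume : Measure ℝ)]
      have m : MeasurableEmbedding fun x : ℝ => -x :=
        (Homeomorph.neg ℝ).measurableEmbedding
      rw [m.integrableOn_map_iff]
      simp_rw [Function.comp_def, abs_neg, neg_preimage, neg_Iic, neg_zero]
      exact Iff.mpr integrableOn_Ici_iff_integrableOn_Ioi hIoi
    have := hIic.union hIoi
    rwa [Iic_union_Ioi, integrableOn_univ] at this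

/-- Integrability of the profile near `0`. -/
lemma g_integrableOn_Ioc_iff {α p : ℝ} (hα : 0 < α) (hp : 1 ≤ p) :
    IntegrableOn (g α p) (Ioc (0 : ℝ) 1) ↔ p < 2 := by
  have hmg : AEStronglyMeasurable (g α p) (volume.restrict (Ioc (0 : ℝ) 1)) :=
    (g_meas α p).aestronglyMeasurable
  have hmr : AEStronglyMeasurable (fun x : ℝ => x ^ (1 - p))
      (volume.restrict (Ioc (0 : ℝ) 1)) :=
    (measurable_id.pow_const _).aestronglyMeasurable
  have key : ∀ x ∈ Ioc (0 : ℝ) 1,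
      (2 : ℝ) ^ (1 / 2 - p) * x ^ (1 - p) ≤ g α p x ∧ g α p x ≤ x ^ (1 - p) := by
    intro x hx
    obtain ⟨hx0, hx1⟩ := hx
    have hb0 : (1 : ℝ) ≤ 1 + x ^ α := by
      have := Real.rpow_nonneg hx0.le α; linarith
    have hb2 : 1 + x ^ α ≤ 2 := by
      have := Real.rpow_le_one hx0.le hx1 hα.le; linarith
    constructor
    · have h1 : (2 : ℝ) ^ (1 / 2 - p) ≤ (1 + x ^ α) ^ (1 / 2 - p) :=
        Real.rpow_le_rpow_of_nonpos (by linarith) hb2 (by linarith)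
      have := mul_le_mul_of_nonneg_left h1 (Real.rpow_nonneg hx0.le (1 - p))
      calc (2 : ℝ) ^ (1 / 2 - p) * x ^ (1 - p)
          = x ^ (1 - p) * (2 : ℝ) ^ (1 / 2 - p) := by ring
        _ ≤ x ^ (1 - p) * (1 + x ^ α) ^ (1 / 2 - p) := this
    · have h1 : (1 + x ^ α) ^ (1 / 2 - p) ≤ 1 :=
        Real.rpow_le_one_of_one_le_of_nonpos hb0 (by linarith)
      calc g α p x ≤ x ^ (1 - p) * 1 :=
            mul_le_mul_of_nonneg_left h1 (Real.rpow_nonneg hx0.le (1 - p))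
        _ = x ^ (1 - p) := mul_one _
  have hrep : IntegrableOn (fun x : ℝ => x ^ (1 - p)) (Ioc (0 : ℝ) 1) ↔ p < 2 := by
    rw [integrableOn_Ioc_iff_integrableOn_Ioo, intervalIntegral.integrableOn_Ioo_rpow_iff one_pos]
    constructor <;> intro h <;> linarith
  constructor
  · intro h
    rw [← hrep]
    refine Integrable.mono' (((h.const_mul ((2 : ℝ) ^ (p - 1 / 2)))) : Integrable _ _) hmr ?_
    rw [ae_restrict_iff' measurableSet_Ioc]
    refine Filter.Eventually.of_forall fun x hx => ?_
    have h2 : (0 : ℝ) < (2 : ℝ) ^ (p - 1 / 2) := Real.rpow_pos_of_pos two_pos _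
    have hlow := (key x hx).1
    rw [Real.norm_eq_abs, abs_of_nonneg (Real.rpow_nonneg hx.1.le _)]
    have h3 : (2 : ℝ) ^ (p - 1 / 2) * ((2 : ℝ) ^ (1 / 2 - p) * x ^ (1 - p))
        ≤ (2 : ℝ) ^ (p - 1 / 2) * g α p x := by
      exact mul_le_mul_of_nonneg_left hlow h2.le
    calc x ^ (1 - p)
        = (2 : ℝ) ^ (p - 1 / 2) * ((2 : ℝ) ^ (1 / 2 - p) * x ^ (1 - p)) := by
          rw [← mul_assoc, ← Real.rpow_add two_pos]
          norm_num
      _ ≤ (2 : ℝ) ^ (p - 1 / 2) * g α p x := h3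
  · intro h
    refine Integrable.mono' (hrep.mpr h) hmg ?_
    rw [ae_restrict_iff' measurableSet_Ioc]
    refine Filter.Eventually.of_forall fun x hx => ?_
    rw [Real.norm_eq_abs, abs_of_nonneg (g_nonneg hx.1.le)]
    exact (key x hx).2

/-- Integrability of the profile near `∞`. -/
lemma g_integrableOn_Ioi_iff {α p : ℝ} (hα : 0 < α) (hp : 1 ≤ p) :
    IntegrableOn (g α p) (Ioi (1 : ℝ)) ↔ 1 - p + α * (1 / 2 - p) < -1 := by
  set q : ℝ := 1 - p + α * (1 / 2 - p) with hq
  have hmg : AEStronglyMeasurable (g α p) (volume.restrict (Ioi (1 : ℝ))) :=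
    (g_meas α p).aestronglyMeasurable
  have hmr : AEStronglyMeasurable (fun x : ℝ => x ^ q)
      (volume.restrict (Ioi (1 : ℝ))) :=
    (measurable_id.pow_const _).aestronglyMeasurable
  have key : ∀ x ∈ Ioi (1 : ℝ),
      (2 : ℝ) ^ (1 / 2 - p) * x ^ q ≤ g α p x ∧ g α p x ≤ x ^ q := by
    intro x hx
    have hx1 : (1 : ℝ) < x := hx
    have hx0 : (0 : ℝ) < x := by linarith
    have hxa : (0 : ℝ) < x ^ α := Real.rpow_pos_of_pos hx0 α
    have hxq : x ^ q = x ^ (1 - p) * (x ^ α) ^ (1 / 2 - p) := by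
      rw [← Real.rpow_mul hx0.le, ← Real.rpow_add hx0]
    constructor
    · have hb : 1 + x ^ α ≤ 2 * x ^ α := by
        have : (1 : ℝ) ≤ x ^ α := Real.one_le_rpow hx1.le hα.le
        linarith
      have h1 : (2 * x ^ α) ^ (1 / 2 - p) ≤ (1 + x ^ α) ^ (1 / 2 - p) :=
        Real.rpow_le_rpow_of_nonpos (by positivity) hb (by linarith)
      have h2 : (2 * x ^ α) ^ (1 / 2 - p) = 2 ^ (1 / 2 - p) * (x ^ α) ^ (1 / 2 - p) :=
        Real.mul_rpow two_pos.le hxa.le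
      calc (2 : ℝ) ^ (1 / 2 - p) * x ^ q
          = x ^ (1 - p) * ((2 : ℝ) ^ (1 / 2 - p) * (x ^ α) ^ (1 / 2 - p)) := by
            rw [hxq]; ring
        _ = x ^ (1 - p) * (2 * x ^ α) ^ (1 / 2 - p) := by rw [h2]
        _ ≤ x ^ (1 - p) * (1 + x ^ α) ^ (1 / 2 - p) :=
            mul_le_mul_of_nonneg_left h1 (Real.rpow_nonneg hx0.le _)
    · have hb : x ^ α ≤ 1 + x ^ α := by linarith
      have h1 : (1 + x ^ α) ^ (1 / 2 - p) ≤ (x ^ α) ^ (1 / 2 - p) :=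
        Real.rpow_le_rpow_of_nonpos hxa hb (by linarith)
      calc g α p x ≤ x ^ (1 - p) * (x ^ α) ^ (1 / 2 - p) :=
            mul_le_mul_of_nonneg_left h1 (Real.rpow_nonneg hx0.le _)
        _ = x ^ q := hxq.symm
  have hrep : IntegrableOn (fun x : ℝ => x ^ q) (Ioi (1 : ℝ)) ↔ q < -1 :=
    integrableOn_Ioi_rpow_iff one_pos
  constructor
  · intro h
    rw [← hrep]
    refine Integrable.mono' ((h.const_mul ((2 : ℝ) ^ (p - 1 / 2))) : Integrable _ _) hmr ?_
    rw [ae_restrict_iff' measurableSet_Ioi]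
    refine Filter.Eventually.of_forall fun x hx => ?_
    have hx0 : (0 : ℝ) < x := lt_trans one_pos hx
    rw [Real.norm_eq_abs, abs_of_nonneg (Real.rpow_nonneg hx0.le _)]
    have h2 : (0 : ℝ) < (2 : ℝ) ^ (p - 1 / 2) := Real.rpow_pos_of_pos two_pos _
    calc x ^ q
        = (2 : ℝ) ^ (p - 1 / 2) * ((2 : ℝ) ^ (1 / 2 - p) * x ^ q) := by
          rw [← mul_assoc, ← Real.rpow_add two_pos]; norm_num
      _ ≤ (2 : ℝ) ^ (p - 1 / 2) * g α p x :=
          mul_le_mul_of_nonneg_left (key x hx).1 h2.le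
  · intro h
    refine Integrable.mono' (hrep.mpr h) hmg ?_
    rw [ae_restrict_iff' measurableSet_Ioi]
    refine Filter.Eventually.of_forall fun x hx => ?_
    have hx0 : (0 : ℝ) < x := lt_trans one_pos hx
    rw [Real.norm_eq_abs, abs_of_nonneg (g_nonneg hx0.le)]
    exact (key x hx).2

lemma g_integrableOn_Ioi_zero_iff {α p : ℝ} (hα : 0 < α) (hp : 1 ≤ p) :
    IntegrableOn (g α p) (Ioi (0 : ℝ)) ↔
      (1 / 2 + 3 / (2 * (1 + α)) < p ∧ p < 2) := by
  have hsplit : Ioc (0 : ℝ) 1 ∪ Ioi 1 = Ioi 0 := Ioc_union_Ioi_eq_Ioi zero_le_one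
  have h1α : (0 : ℝ) < 1 + α := by linarith
  rw [← hsplit, integrableOn_union, g_integrableOn_Ioc_iff hα hp,
    g_integrableOn_Ioi_iff hα hp]
  have harith : (1 - p + α * (1 / 2 - p) < -1) ↔ (1 / 2 + 3 / (2 * (1 + α)) < p) := by
    have h2 : (0 : ℝ) < 2 * (1 + α) := by positivity
    rw [show (1 / 2 + 3 / (2 * (1 + α)) < p) ↔ (3 / (2 * (1 + α)) < p - 1 / 2) from
      ⟨fun h => by linarith, fun h => by linarith⟩, div_lt_iff₀ h2]
    constructor <;> intro h <;> nlinarith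
  rw [harith]
  tauto

end HSymbAux

open HSymbAux in
/-- **`L^p`-integrability of the symbol `h_α`** (Lemma 3.8 (a)): for `α > 0` and
`1 ≤ p < ∞`, `h_α ∈ L^p(ℝ²)` if and only if `1/2 + 3/(2(1+α)) < p < 2`. -/
theorem hSymb_memLp_iff (α : ℝ) (hα : 0 < α) (p : ℝ) (hp : 1 ≤ p) :
    Integrable (fun ξ : ℝ × ℝ => |hSymb α ξ| ^ p) (volume : Measure (ℝ × ℝ)) ↔
      (1 / 2 + 3 / (2 * (1 + α)) < p ∧ p < 2) := by
  have hae0 : ∀ᵐ x : ℝ ∂(volume : Measure ℝ), x ≠ 0 := by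
    rw [ae_iff]
    simp only [not_not, setOf_eq_eq_singleton]
    exact measure_singleton 0
  have hmeas := hSymb_meas α p
  rw [Measure.volume_eq_prod]
  rw [integrable_prod_iff hmeas.aestronglyMeasurable]
  have hsec : ∀ᵐ x : ℝ ∂(volume : Measure ℝ),
      Integrable fun y : ℝ => |hSymb α (x, y)| ^ p := by
    filter_upwards [hae0] with x hx
    exact section_integrable hp hx
  have hcongr : (fun x : ℝ => ∫ y : ℝ, ‖|hSymb α (x, y)| ^ p‖)
      =ᵐ[volume] fun x => Cp p * g α p |x| := by
    filter_upwards [hae0] with x hx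
    have : (fun y : ℝ => ‖|hSymb α (x, y)| ^ p‖) = fun y => |hSymb α (x, y)| ^ p := by
      ext y
      rw [Real.norm_eq_abs, abs_of_nonneg (Real.rpow_nonneg (abs_nonneg _) _)]
    rw [this, section_integral hx]
  have hstep : Integrable (fun x : ℝ => ∫ y : ℝ, ‖|hSymb α (x, y)| ^ p‖) ↔
      IntegrableOn (g α p) (Ioi (0 : ℝ)) := by
    rw [integrable_congr hcongr]
    have : (fun x : ℝ => Cp p * g α p |x|) = (Cp p) • (fun x : ℝ => g α p |x|) := by
      ext x; simp [smul_eq_mul]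
    rw [this, integrable_smul_iff (Cp_pos hp).ne' (fun x : ℝ => g α p |x|),
      integrable_comp_abs_iff]
  constructor
  · rintro ⟨-, h2⟩
    exact (g_integrableOn_Ioi_zero_iff hα hp).1 (hstep.1 h2)
  · intro hcond
    exact ⟨hsec, hstep.2 ((g_integrableOn_Ioi_zero_iff hα hp).2 hcond)⟩
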